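/- For all complex ξ₁, ξ₂, p, q, η with Re(ξ₁) > 0, Re(ξ₂) > 0, Re(p) > 0, Re(q) > 0 and Re(η) > -1, the extended beta function admits the integral representation over the half-line B_η^{p,q}(ξ₁,ξ₂) = ∫₀^∞ w^{ξ₁-1} (1+w)^{-(ξ₁+ξ₂)} S_η(-p(1+w)/w) S_η(-q(1+w)) dw. -/

import Mathlib

open MeasureTheory Complex

/-- The Bessel–Struve kernel function, defined by its power series. -/
noncomputable def besselStruve (η t : ℂ) : ℂ :=
  (Complex.Gamma (η + 1) / (Real.sqrt Real.pi : ℂ)) *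
    ∑' m : ℕ, t ^ m * Complex.Gamma (((m : ℂ) + 1) / 2) /
      ((m.factorial : ℂ) * Complex.Gamma ((m : ℂ) / 2 + η + 1))

/-- The extended beta function `B_η^{p,q}(ξ₁, ξ₂)`. -/
noncomputable def extBeta (η p q ξ₁ ξ₂ : ℂ) : ℂ :=
  ∫ y in (0:ℝ)..1, (y : ℂ) ^ (ξ₁ - 1) * ((1 : ℂ) - (y : ℂ)) ^ (ξ₂ - 1) *
    besselStruve η (-p / (y : ℂ)) * besselStruve η (-q / (1 - (y : ℂ)))

/-- The Pochhammer symbol `(a)_l = Γ(a + l)/Γ(a)`. -/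
noncomputable def poch (a : ℂ) (l : ℕ) : ℂ := Complex.Gamma (a + l) / Complex.Gamma a

/-- The extended Gauss hypergeometric function `F_η^{p,q}(ξ₁, ξ₂; ξ₃; x)`. -/
noncomputable def extF (η p q ξ₁ ξ₂ ξ₃ x : ℂ) : ℂ :=
  ∑' l : ℕ, poch ξ₁ l * extBeta η p q (ξ₂ + l) (ξ₃ - ξ₂) * x ^ l /
    (Complex.betaIntegral ξ₂ (ξ₃ - ξ₂) * (l.factorial : ℂ))

/-- The extended confluent hypergeometric function `Φ_η^{p,q}(ξ₂; ξ₃; x)`. -/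
noncomputable def extPhi (η p q ξ₂ ξ₃ x : ℂ) : ℂ :=
  ∑' l : ℕ, extBeta η p q (ξ₂ + l) (ξ₃ - ξ₂) * x ^ l /
    (Complex.betaIntegral ξ₂ (ξ₃ - ξ₂) * (l.factorial : ℂ))

theorem extBeta_halfline_repr (ξ₁ ξ₂ p q η : ℂ)
    (h1 : 0 < ξ₁.re) (h2 : 0 < ξ₂.re) (hp : 0 < p.re) (hq : 0 < q.re) (hη : -1 < η.re) :
    extBeta η p q ξ₁ ξ₂ =
      ∫ w in Set.Ioi (0:ℝ),
        (w : ℂ) ^ (ξ₁ - 1) * ((1 : ℂ) + (w : ℂ)) ^ (-(ξ₁ + ξ₂)) *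
          besselStruve η (-(p * (1 + (w : ℂ))) / (w : ℂ)) *
          besselStruve η (-(q * (1 + (w : ℂ)))) := by
  have him : (fun w : ℝ => w / (1 + w)) '' Set.Ioi 0 = Set.Ioo 0 1 := by
    ext y
    constructor
    · rintro ⟨w, hw, rfl⟩
      have hw0 : (0:ℝ) < w := hw
      have h1w : (0:ℝ) < 1 + w := by linarith
      exact ⟨by positivity, by rw [div_lt_one h1w]; linarith⟩
    · rintro ⟨hy0, hy1⟩
      have h1y : (0:ℝ) < 1 - y := by linarith
      refine ⟨y / (1 - y), Set.mem_Ioi.mpr (by positivity), ?_⟩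
      field_simp
      ring
  have hderiv : ∀ w ∈ Set.Ioi (0:ℝ),
      HasDerivWithinAt (fun w : ℝ => w / (1 + w)) (((1 + w) ^ 2)⁻¹) (Set.Ioi 0) w := by
    intro w hw
    have h1w : (1:ℝ) + w ≠ 0 := by have : (0:ℝ) < w := hw; linarith
    have hadd : HasDerivAt (fun w : ℝ => 1 + w) 1 w := by
      simpa using (hasDerivAt_id w).const_add 1
    have : HasDerivAt (fun w : ℝ => w / (1 + w))
        ((1 * (1 + w) - w * 1) / (1 + w) ^ 2) w := (hasDerivAt_id w).div hadd h1w
    rw [show ((1 + w) ^ 2)⁻¹ = (1 * (1 + w) - w * 1) / (1 + w) ^ 2 by ring]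
    exact this.hasDerivWithinAt
  have hinj : Set.InjOn (fun w : ℝ => w / (1 + w)) (Set.Ioi 0) := by
    intro a ha b hb hab
    have ha0 : (0:ℝ) < a := ha
    have hb0 : (0:ℝ) < b := hb
    have ha1 : (1:ℝ) + a ≠ 0 := by linarith
    have hb1 : (1:ℝ) + b ≠ 0 := by linarith
    field_simp at hab
    linarith
  rw [extBeta, intervalIntegral.integral_of_le zero_le_one,
    MeasureTheory.integral_Ioc_eq_integral_Ioo, ← him,
    MeasureTheory.integral_image_eq_integral_abs_deriv_smul measurableSet_Ioi hderiv hinj]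
  refine MeasureTheory.setIntegral_congr_fun measurableSet_Ioi (fun w hw => ?_)
  have hw0 : (0:ℝ) < w := hw
  have h1w : (0:ℝ) < 1 + w := by linarith
  have h1w' : (1:ℝ) + w ≠ 0 := h1w.ne'
  have hA : (w:ℂ) ≠ 0 := by exact_mod_cast hw0.ne'
  have hB : (1:ℂ) + w ≠ 0 := by exact_mod_cast h1w.ne'
  have hBc : ((1 + w : ℝ) : ℂ) = 1 + (w:ℂ) := by push_cast; ring
  have harg : ((1 + w : ℝ) : ℂ).arg ≠ Real.pi := by
    rw [Complex.arg_ofReal_of_nonneg h1w.le]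
    exact Real.pi_ne_zero.symm
  -- bessel arguments
  have hb1 : -p / ((w / (1 + w) : ℝ) : ℂ) = -(p * (1 + (w:ℂ))) / (w:ℂ) := by
    push_cast
    field_simp
  have hb2' : -q / (((1 + w : ℝ)⁻¹ : ℝ) : ℂ) = -(q * (1 + (w:ℂ))) := by
    push_cast
    rw [div_eq_mul_inv, inv_inv]
    ring
  -- cpow manipulations
  have hsplit : (((w / (1 + w) : ℝ)) : ℂ) ^ (ξ₁ - 1)
      = (w:ℂ) ^ (ξ₁ - 1) * (((1 + w : ℝ)⁻¹ : ℝ) : ℂ) ^ (ξ₁ - 1) := by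
    rw [div_eq_mul_inv, Complex.ofReal_mul]
    exact Complex.mul_cpow_ofReal_nonneg hw0.le (by positivity : (0:ℝ) ≤ (1 + w)⁻¹) _
  have hinvB : ∀ z : ℂ, (((1 + w : ℝ)⁻¹ : ℝ) : ℂ) ^ z = ((1 + (w:ℂ)) ^ z)⁻¹ := by
    intro z
    rw [show (((1 + w : ℝ)⁻¹ : ℝ) : ℂ) = ((1 + w : ℝ) : ℂ)⁻¹ by push_cast; ring,
      Complex.inv_cpow _ _ harg, hBc]
  have hone : (1:ℂ) - ((w / (1 + w) : ℝ) : ℂ) = (((1 + w : ℝ)⁻¹ : ℝ) : ℂ) := by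
    push_cast
    field_simp
    ring
  have hBsum : (1 + (w:ℂ)) ^ (ξ₁ + ξ₂)
      = (1 + (w:ℂ)) ^ (ξ₁ - 1) * (1 + (w:ℂ)) ^ (ξ₂ - 1) * (1 + (w:ℂ)) ^ (2:ℕ) := by
    rw [← Complex.cpow_natCast, ← Complex.cpow_add _ _ hB, ← Complex.cpow_add _ _ hB]
    congr 1
    push_cast
    ring
  simp only [hone, hb1, hb2', hsplit, hinvB, Complex.cpow_neg, hBsum]
  rw [_root_.abs_of_nonneg (by positivity), Complex.real_smul]
  push_cast
  field_simp
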